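/- In the setting of the finite-horizon Riccati recursion with zero terminal value, assume in addition Q = C′C with (A, Q^{1/2}) observable, where A is n×n. Then there exists an integer N_0 ≥ 0 such that Ψ_0(N_0) := (1−p)Z_0(N_0) + pX_0(N_0) is positive definite (and hence, by monotonicity, Ψ_0(N) > 0 for all N ≥ N_0). -/

import Mathlib

open Matrix

noncomputable section

section OldSqrt

open scoped ComplexOrder

/-- The positive semidefinite square root of a positive semidefinite matrix
(the definition `Matrix.PosSemidef.sqrt` of the older Mathlib, removed since). -/
def Matrix.PosSemidef.sqrt {n 𝕜 : Type*} [Fintype n] [RCLike 𝕜] [DecidableEq n]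
    {A : Matrix n n 𝕜} (hA : A.PosSemidef) : Matrix n n 𝕜 :=
  hA.1.eigenvectorUnitary.1 * diagonal ((↑) ∘ Real.sqrt ∘ hA.1.eigenvalues) *
    (star hA.1.eigenvectorUnitary : Matrix n n 𝕜)

end OldSqrt

section OldSqrtLemmas

open scoped ComplexOrder

lemma Matrix.PosSemidef.posSemidef_sqrt {n 𝕜 : Type*} [Fintype n] [RCLike 𝕜] [DecidableEq n]
    {A : Matrix n n 𝕜} (hA : A.PosSemidef) : hA.sqrt.PosSemidef := by
  have hD : (diagonal ((↑) ∘ Real.sqrt ∘ hA.1.eigenvalues : n → 𝕜)).PosSemidef :=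
    Matrix.PosSemidef.diagonal (fun i => RCLike.ofReal_nonneg.mpr (Real.sqrt_nonneg _))
  have := hD.mul_mul_conjTranspose_same (hA.1.eigenvectorUnitary : Matrix n n 𝕜)
  unfold Matrix.PosSemidef.sqrt
  rwa [Matrix.star_eq_conjTranspose]

lemma Matrix.PosSemidef.sqrt_mul_self {n 𝕜 : Type*} [Fintype n] [RCLike 𝕜] [DecidableEq n]
    {A : Matrix n n 𝕜} (hA : A.PosSemidef) : hA.sqrt * hA.sqrt = A := by
  unfold Matrix.PosSemidef.sqrt
  conv_rhs => rw [hA.1.spectral_theorem, Unitary.conjStarAlgAut_apply]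
  have hu : (star hA.1.eigenvectorUnitary : Matrix n n 𝕜) *
      (hA.1.eigenvectorUnitary : Matrix n n 𝕜) = 1 := by simp
  have e : ∀ (U D S : Matrix n n 𝕜), U * D * S * (U * D * S) = U * (D * (S * U) * D) * S := by
    intro U D S; simp only [Matrix.mul_assoc]
  have hd : (fun i => (↑√(hA.1.eigenvalues i) : 𝕜) * ↑√(hA.1.eigenvalues i)) =
      RCLike.ofReal ∘ hA.1.eigenvalues := by
    funext i
    simp only [Function.comp_apply]
    rw [← RCLike.ofReal_mul, Real.mul_self_sqrt (hA.eigenvalues_nonneg i)]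
  rw [e, hu, Matrix.mul_one, diagonal_mul_diagonal]
  simp only [Function.comp_apply]
  rw [hd]

end OldSqrtLemmas

namespace NCS13

/-- System data for the networked control system: plant matrices `A, B^L, B^R`,
weight matrices `Q, R^L, R^R` and packet-dropout probability `p`. -/
structure Sys (n mL mR : ℕ) where
  A : Matrix (Fin n) (Fin n) ℝ
  BL : Matrix (Fin n) (Fin mL) ℝ
  BR : Matrix (Fin n) (Fin mR) ℝ
  Q : Matrix (Fin n) (Fin n) ℝ
  RL : Matrix (Fin mL) (Fin mL) ℝ
  RR : Matrix (Fin mR) (Fin mR) ℝ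
  p : ℝ

namespace Sys

variable {n mL mR : ℕ} (S : Sys n mL mR)

/-- The stacked input matrix `[B^L  B^R]`. -/
def Bc : Matrix (Fin n) (Fin mL ⊕ Fin mR) ℝ := fromCols S.BL S.BR

/-- The stacked weight `diag(R^L, R^R)`. -/
def Rc : Matrix (Fin mL ⊕ Fin mR) (Fin mL ⊕ Fin mR) ℝ := fromBlocks S.RL 0 0 S.RR

/-- `Υ = [B^L B^R]′ Z [B^L B^R] + diag(R^L, R^R)`. -/
def Ups (Z : Matrix (Fin n) (Fin n) ℝ) : Matrix (Fin mL ⊕ Fin mR) (Fin mL ⊕ Fin mR) ℝ :=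
  S.Bcᵀ * Z * S.Bc + S.Rc

/-- `K = Υ⁻¹ [B^L B^R]′ Z A`. -/
def Kg (Z : Matrix (Fin n) (Fin n) ℝ) : Matrix (Fin mL ⊕ Fin mR) (Fin n) ℝ :=
  (S.Ups Z)⁻¹ * (S.Bcᵀ * Z * S.A)

/-- `Ψ = (1 − p) Z + p X`. -/
def Psi (Z X : Matrix (Fin n) (Fin n) ℝ) : Matrix (Fin n) (Fin n) ℝ :=
  (1 - S.p) • Z + S.p • X

/-- `Λ = (B^L)′ Ψ B^L + R^L`. -/
def Lam (Ψ : Matrix (Fin n) (Fin n) ℝ) : Matrix (Fin mL) (Fin mL) ℝ :=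
  S.BLᵀ * Ψ * S.BL + S.RL

/-- `M = (B^L)′ Ψ A`. -/
def Mg (Ψ : Matrix (Fin n) (Fin n) ℝ) : Matrix (Fin mL) (Fin n) ℝ :=
  S.BLᵀ * Ψ * S.A

/-- One backward step of the `Z`-Riccati recursion: `A′ZA + Q − K′ΥK`. -/
def Zstep (Z : Matrix (Fin n) (Fin n) ℝ) : Matrix (Fin n) (Fin n) ℝ :=
  S.Aᵀ * Z * S.A + S.Q - (S.Kg Z)ᵀ * S.Ups Z * S.Kg Z

/-- One backward step of the `X`-Riccati recursion: `A′ΨA + Q − M′Λ⁻¹M`. -/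
def Xstep (Ψ : Matrix (Fin n) (Fin n) ℝ) : Matrix (Fin n) (Fin n) ℝ :=
  S.Aᵀ * Ψ * S.A + S.Q - (S.Mg Ψ)ᵀ * (S.Lam Ψ)⁻¹ * S.Mg Ψ

/-- The coupled Riccati recursion in "steps-to-go" form with terminal value `P`:
`ZX P j` is the pair `(Z_k(N), X_k(N))` when `j = N + 1 − k`.  In particular the
time-invariance `Z_k(N) = Z_{k−s}(N−s)` lets one write `Z_0(N) = (ZX P (N+1)).1`. -/
def ZX (P : Matrix (Fin n) (Fin n) ℝ) : ℕ → Matrix (Fin n) (Fin n) ℝ × Matrix (Fin n) (Fin n) ℝ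
  | 0 => (P, P)
  | j + 1 =>
      (S.Zstep (ZX P j).1, S.Xstep (S.Psi (ZX P j).1 (ZX P j).2))

end Sys


lemma quad_conj {a b : Type*} [Fintype a] [Fintype b]
    (M : Matrix a a ℝ) (B : Matrix a b ℝ) (v : b → ℝ) :
    v ⬝ᵥ (Bᵀ * M * B) *ᵥ v = (B *ᵥ v) ⬝ᵥ M *ᵥ (B *ᵥ v) := by
  rw [← Matrix.mulVec_mulVec, ← Matrix.mulVec_mulVec, Matrix.dotProduct_mulVec,
    Matrix.vecMul_transpose]

lemma quad_sq {a : Type*} [Fintype a] {S : Matrix a a ℝ} (hS : Sᵀ = S) (v : a → ℝ) :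
    v ⬝ᵥ (S * S) *ᵥ v = (S *ᵥ v) ⬝ᵥ (S *ᵥ v) := by
  rw [← Matrix.mulVec_mulVec, Matrix.dotProduct_mulVec]
  nth_rewrite 1 [← hS]
  rw [Matrix.vecMul_transpose]

lemma posSemidef_conj {a b : Type*} [Fintype a] [Fintype b]
    {M : Matrix a a ℝ} (hM : M.PosSemidef) (B : Matrix a b ℝ) :
    (Bᵀ * M * B).PosSemidef := by
  have := hM.conjTranspose_mul_mul_same B
  rwa [Matrix.conjTranspose_eq_transpose_of_trivial] at this

lemma transpose_eq_self_of_posSemidef {a : Type*} [Fintype a]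
    {M : Matrix a a ℝ} (hM : M.PosSemidef) : Mᵀ = M := by
  have := hM.isHermitian
  rwa [Matrix.IsHermitian, Matrix.conjTranspose_eq_transpose_of_trivial] at this


lemma quad_nonneg {a : Type*} [Fintype a] {M : Matrix a a ℝ} (hM : M.PosSemidef)
    (x : a → ℝ) : 0 ≤ x ⬝ᵥ M *ᵥ x := by
  have := hM.dotProduct_mulVec_nonneg x
  rwa [star_trivial] at this

lemma quad_pos {a : Type*} [Fintype a] {M : Matrix a a ℝ} (hM : M.PosDef)
    {x : a → ℝ} (hx : x ≠ 0) : 0 < x ⬝ᵥ M *ᵥ x := by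
  have := hM.dotProduct_mulVec_pos hx
  rwa [star_trivial] at this

private lemma square_helper {n : ℕ} {m : Type*} [Fintype m]
    (A P Q : Matrix (Fin n) (Fin n) ℝ) (B : Matrix (Fin n) m ℝ)
    (R U G : Matrix m m ℝ) (W K : Matrix m (Fin n) ℝ)
    (hU : U = Bᵀ * P * B + R) (hW : W = Bᵀ * P * A)
    (hUK : U * K = W) (hKt : Kᵀ = Wᵀ * G) (hPt : Pᵀ = P) (hUt : Uᵀ = U) :
    Aᵀ * P * A + Q - Wᵀ * G * W =
      (A - B * K)ᵀ * P * (A - B * K) + Kᵀ * R * K + Q := by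
  have h1 : Aᵀ * P * B = Kᵀ * U := by
    have h := congrArg Matrix.transpose hUK
    rw [Matrix.transpose_mul, hUt] at h
    rw [h, hW, Matrix.transpose_mul, Matrix.transpose_mul, Matrix.transpose_transpose,
      hPt, ← Matrix.mul_assoc]
  have hWGW : Wᵀ * G * W = Kᵀ * (U * K) := by
    rw [hUK, ← hKt]
  have e1 : Aᵀ * P * (B * K) = Kᵀ * (U * K) := by
    rw [← Matrix.mul_assoc, h1, Matrix.mul_assoc]
  have e2 : Kᵀ * Bᵀ * P * A = Kᵀ * (U * K) := by
    rw [hUK, hW]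
    simp only [Matrix.mul_assoc]
  have e3 : Kᵀ * Bᵀ * P * (B * K) = Kᵀ * (U * K) - Kᵀ * R * K := by
    rw [eq_sub_iff_add_eq, hU, Matrix.add_mul, Matrix.mul_add]
    simp only [Matrix.mul_assoc]
  rw [hWGW, Matrix.transpose_sub, Matrix.transpose_mul, Matrix.sub_mul, Matrix.sub_mul,
    Matrix.mul_sub, Matrix.mul_sub, e1, e2, e3]
  abel

section Gen

variable {n : ℕ} {m : Type*} [Fintype m] [DecidableEq m]

/-- generic Riccati step -/
def gstep (A Q : Matrix (Fin n) (Fin n) ℝ) (B : Matrix (Fin n) m ℝ) (R : Matrix m m ℝ)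
    (P : Matrix (Fin n) (Fin n) ℝ) : Matrix (Fin n) (Fin n) ℝ :=
  Aᵀ * P * A + Q - (Bᵀ * P * A)ᵀ * (Bᵀ * P * B + R)⁻¹ * (Bᵀ * P * A)

variable {A Q : Matrix (Fin n) (Fin n) ℝ} {B : Matrix (Fin n) m ℝ} {R : Matrix m m ℝ}
  {P : Matrix (Fin n) (Fin n) ℝ}

lemma ups_posDef (hP : P.PosSemidef) (hR : R.PosDef) : (Bᵀ * P * B + R).PosDef :=
  Matrix.PosDef.posSemidef_add (posSemidef_conj hP B) hR

lemma gstep_eq (hP : P.PosSemidef) (hR : R.PosDef) :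
    gstep A Q B R P =
      (A - B * ((Bᵀ * P * B + R)⁻¹ * (Bᵀ * P * A)))ᵀ * P *
          (A - B * ((Bᵀ * P * B + R)⁻¹ * (Bᵀ * P * A))) +
        ((Bᵀ * P * B + R)⁻¹ * (Bᵀ * P * A))ᵀ * R *
          ((Bᵀ * P * B + R)⁻¹ * (Bᵀ * P * A)) + Q := by
  have hUpd : (Bᵀ * P * B + R).PosDef := ups_posDef hP hR
  have hdet : IsUnit (Bᵀ * P * B + R).det := (Matrix.isUnit_iff_isUnit_det _).mp hUpd.isUnit
  have hUt : (Bᵀ * P * B + R)ᵀ = Bᵀ * P * B + R :=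
    transpose_eq_self_of_posSemidef hUpd.posSemidef
  have hKt : ((Bᵀ * P * B + R)⁻¹ * (Bᵀ * P * A))ᵀ = (Bᵀ * P * A)ᵀ * (Bᵀ * P * B + R)⁻¹ := by
    rw [Matrix.transpose_mul, Matrix.transpose_nonsing_inv, hUt]
  have := square_helper A P Q B R (Bᵀ * P * B + R) ((Bᵀ * P * B + R)⁻¹) (Bᵀ * P * A)
    ((Bᵀ * P * B + R)⁻¹ * (Bᵀ * P * A)) rfl rfl
    (Matrix.mul_nonsing_inv_cancel_left _ _ hdet) hKt
    (transpose_eq_self_of_posSemidef hP) hUt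
  rw [gstep, this]

lemma gstep_posSemidef (hP : P.PosSemidef) (hR : R.PosDef) (hQ : Q.PosSemidef) :
    (gstep A Q B R P).PosSemidef := by
  rw [gstep_eq hP hR]
  exact ((posSemidef_conj hP _).add (posSemidef_conj hR.posSemidef _)).add hQ

lemma gstep_quad_zero (hP : P.PosSemidef) (hR : R.PosDef) (hQ : Q.PosSemidef)
    (v : Fin n → ℝ) (hv : v ⬝ᵥ (gstep A Q B R P) *ᵥ v = 0) :
    hQ.sqrt *ᵥ v = 0 ∧ (A *ᵥ v) ⬝ᵥ P *ᵥ (A *ᵥ v) = 0 := by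
  rw [gstep_eq hP hR] at hv
  generalize hKdef : (Bᵀ * P * B + R)⁻¹ * (Bᵀ * P * A) = K at hv
  have n1 := quad_nonneg (posSemidef_conj hP (A - B * K)) v
  have n2 := quad_nonneg (posSemidef_conj hR.posSemidef K) v
  have n3 := quad_nonneg hQ v
  rw [Matrix.add_mulVec, Matrix.add_mulVec, dotProduct_add, dotProduct_add] at hv
  have z1 : v ⬝ᵥ ((A - B * K)ᵀ * P * (A - B * K)) *ᵥ v = 0 := by linarith
  have z2 : v ⬝ᵥ (Kᵀ * R * K) *ᵥ v = 0 := by linarith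
  have z3 : v ⬝ᵥ Q *ᵥ v = 0 := by linarith
  have hKv : K *ᵥ v = 0 := by
    rw [quad_conj] at z2
    by_contra h
    exact (quad_pos hR h).ne' z2
  have hcl : (A - B * K) *ᵥ v = A *ᵥ v := by
    rw [Matrix.sub_mulVec, ← Matrix.mulVec_mulVec, hKv, Matrix.mulVec_zero, sub_zero]
  constructor
  · have hsq : hQ.sqrt ᵀ = hQ.sqrt := transpose_eq_self_of_posSemidef hQ.posSemidef_sqrt
    have h4 : v ⬝ᵥ (hQ.sqrt * hQ.sqrt) *ᵥ v = 0 := by rw [hQ.sqrt_mul_self]; exact z3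
    rw [quad_sq hsq] at h4
    exact dotProduct_self_eq_zero.mp h4
  · rw [quad_conj, hcl] at z1
    exact z1

lemma gchain (hR : R.PosDef) (hQ : Q.PosSemidef)
    (P : ℕ → Matrix (Fin n) (Fin n) ℝ) (hP0 : P 0 = 0)
    (hstep : ∀ j, (P j).PosSemidef → P (j + 1) = gstep A Q B R (P j)) :
    ∀ j, (P j).PosSemidef ∧
      ∀ v : Fin n → ℝ, v ⬝ᵥ (P j) *ᵥ v = 0 → ∀ i, i < j → hQ.sqrt *ᵥ (A ^ i *ᵥ v) = 0 := by
  intro j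
  induction j with
  | zero =>
      refine ⟨hP0 ▸ Matrix.PosSemidef.zero, ?_⟩
      intro v _ i hi
      omega
  | succ j ih =>
      have hs := hstep j ih.1
      constructor
      · rw [hs]; exact gstep_posSemidef ih.1 hR hQ
      · intro v hv i hi
        rw [hs] at hv
        obtain ⟨h1, h2⟩ := gstep_quad_zero ih.1 hR hQ v hv
        match i with
        | 0 => simpa using h1
        | i + 1 =>
            have h3 := ih.2 (A *ᵥ v) h2 i (by omega)
            rw [Matrix.mulVec_mulVec] at h3
            rw [pow_succ, ← Matrix.mulVec_mulVec, Matrix.mulVec_mulVec]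
            exact h3

lemma gchain_posDef (hR : R.PosDef) (hQ : Q.PosSemidef)
    (hobs : ∀ v : Fin n → ℝ,
      (∀ j : ℕ, j < n → (hQ.sqrt * A ^ j) *ᵥ v = 0) → v = 0)
    (P : ℕ → Matrix (Fin n) (Fin n) ℝ) (hP0 : P 0 = 0)
    (hstep : ∀ j, (P j).PosSemidef → P (j + 1) = gstep A Q B R (P j))
    {j : ℕ} (hj : n ≤ j) : (P j).PosDef := by
  obtain ⟨hpsd, hchain⟩ := gchain hR hQ P hP0 hstep j
  refine Matrix.PosDef.of_dotProduct_mulVec_pos hpsd.isHermitian (fun v hv => ?_)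
  have hle : 0 ≤ v ⬝ᵥ (P j) *ᵥ v := by simpa using hpsd.dotProduct_mulVec_nonneg v
  have hne : v ⬝ᵥ (P j) *ᵥ v ≠ 0 := by
    intro h0
    apply hv
    apply hobs
    intro i hi
    rw [← Matrix.mulVec_mulVec]
    exact hchain v h0 i (lt_of_lt_of_le hi hj)
  simpa using lt_of_le_of_ne hle (Ne.symm hne)

end Gen


lemma KUK {a b : Type*} [Fintype a] [Fintype b] [DecidableEq b]
    {U : Matrix b b ℝ} (W : Matrix b a ℝ) (hUt : Uᵀ = U) (hdet : IsUnit U.det) :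
    (U⁻¹ * W)ᵀ * U * (U⁻¹ * W) = Wᵀ * U⁻¹ * W := by
  rw [Matrix.transpose_mul, Matrix.transpose_nonsing_inv, hUt,
    Matrix.mul_assoc (Wᵀ * U⁻¹) U (U⁻¹ * W), Matrix.mul_nonsing_inv_cancel_left U W hdet]

lemma posSemidef_zero {a : Type*} [Fintype a] : (0 : Matrix a a ℝ).PosSemidef :=
  Matrix.PosSemidef.zero

lemma posSemidef_smul {a : Type*} [Fintype a] {M : Matrix a a ℝ}
    (hM : M.PosSemidef) {c : ℝ} (hc : 0 ≤ c) : (c • M).PosSemidef := by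
  refine Matrix.PosSemidef.of_dotProduct_mulVec_nonneg ?_ ?_
  · have h := transpose_eq_self_of_posSemidef hM
    rw [Matrix.IsHermitian, Matrix.conjTranspose_eq_transpose_of_trivial,
      Matrix.transpose_smul, h]
  · intro x
    rw [Matrix.smul_mulVec, dotProduct_smul]
    simpa using mul_nonneg hc (quad_nonneg hM x)

lemma posDef_fromBlocks {a b : Type*} [Fintype a] [Fintype b] [DecidableEq a] [DecidableEq b]
    {A : Matrix a a ℝ} {D : Matrix b b ℝ} (hA : A.PosDef) (hD : D.PosDef) :
    (Matrix.fromBlocks A 0 0 D).PosDef := by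
  refine Matrix.PosDef.of_dotProduct_mulVec_pos ?_ ?_
  · rw [Matrix.IsHermitian, Matrix.fromBlocks_conjTranspose, hA.isHermitian.eq,
      hD.isHermitian.eq]
    simp
  · intro x hx
    have hx' : Sum.elim (x ∘ Sum.inl) (x ∘ Sum.inr) = x := Sum.elim_comp_inl_inr x
    set u := x ∘ Sum.inl
    set w := x ∘ Sum.inr
    have hmv : Matrix.fromBlocks A 0 0 D *ᵥ x = Sum.elim (A *ᵥ u) (D *ᵥ w) := by
      rw [← hx', Matrix.fromBlocks_mulVec]
      simp
    have hsx : star x = x := by simp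
    rw [hsx, hmv, ← hx', sumElim_dotProduct_sumElim]
    have huw : u ≠ 0 ∨ w ≠ 0 := by
      by_contra h
      push_neg at h
      apply hx
      rw [← hx', h.1, h.2]
      ext (i | i) <;> simp
    rcases huw with h | h
    · exact add_pos_of_pos_of_nonneg (quad_pos hA h) (quad_nonneg hD.posSemidef w)
    · exact add_pos_of_nonneg_of_pos (quad_nonneg hA.posSemidef u) (quad_pos hD h)

section Bridge

variable {n mL mR : ℕ}

lemma Xstep_eq_gstep (S : Sys n mL mR) (Ψ : Matrix (Fin n) (Fin n) ℝ) :
    S.Xstep Ψ = gstep S.A S.Q S.BL S.RL Ψ := rfl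

lemma Zstep_eq_gstep (S : Sys n mL mR) {Z : Matrix (Fin n) (Fin n) ℝ} (hZ : Z.PosSemidef)
    (hRL : S.RL.PosDef) (hRR : S.RR.PosDef) :
    S.Zstep Z = gstep S.A S.Q S.Bc S.Rc Z := by
  have hRc : S.Rc.PosDef := posDef_fromBlocks hRL hRR
  have hU : (S.Bcᵀ * Z * S.Bc + S.Rc).PosDef := ups_posDef hZ hRc
  have hUt := transpose_eq_self_of_posSemidef hU.posSemidef
  have hdet : IsUnit (S.Bcᵀ * Z * S.Bc + S.Rc).det :=
    (Matrix.isUnit_iff_isUnit_det _).mp hU.isUnit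
  simp only [Sys.Zstep, Sys.Kg, Sys.Ups, gstep]
  rw [KUK (S.Bcᵀ * Z * S.A) hUt hdet]

lemma ZX_psd (S : Sys n mL mR) (hQ : S.Q.PosSemidef) (hRL : S.RL.PosDef) (hRR : S.RR.PosDef)
    (hp0 : 0 ≤ S.p) (hp1 : S.p ≤ 1) :
    ∀ j, (S.ZX 0 j).1.PosSemidef ∧ (S.ZX 0 j).2.PosSemidef := by
  intro j
  induction j with
  | zero => exact ⟨posSemidef_zero, posSemidef_zero⟩
  | succ j ih =>
      have hPsi : (S.Psi (S.ZX 0 j).1 (S.ZX 0 j).2).PosSemidef := by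
        simp only [Sys.Psi]
        exact (posSemidef_smul ih.1 (by linarith)).add (posSemidef_smul ih.2 hp0)
      constructor
      · show (S.Zstep (S.ZX 0 j).1).PosSemidef
        rw [Zstep_eq_gstep S ih.1 hRL hRR]
        exact gstep_posSemidef ih.1 (posDef_fromBlocks hRL hRR) hQ
      · show (S.Xstep (S.Psi (S.ZX 0 j).1 (S.ZX 0 j).2)).PosSemidef
        rw [Xstep_eq_gstep]
        exact gstep_posSemidef hPsi hRL hQ

end Bridge

/-- In the setting of the finite-horizon Riccati recursion with zero
terminal value, if in addition `Q = C′C` with `(A, Q^{1/2})` observable, then there is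
an integer `N₀ ≥ 0` such that `Ψ_0(N₀) = (1−p)Z_0(N₀) + pX_0(N₀)` is positive definite
(and hence, by monotonicity, `Ψ_0(N) > 0` for all `N ≥ N₀`). -/
theorem riccati_psi_eventually_posdef {n mL mR : ℕ} (S : Sys n mL mR)
    (hQ : S.Q.PosSemidef) (hRL : S.RL.PosDef) (hRR : S.RR.PosDef)
    (hp0 : 0 ≤ S.p) (hp1 : S.p ≤ 1)
    (hobs : ∀ v : Fin n → ℝ,
      (∀ j : ℕ, j < n → (hQ.sqrt * S.A ^ j) *ᵥ v = 0) → v = 0) :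
    ∃ N0 : ℕ, ∀ N : ℕ, N0 ≤ N →
      (S.Psi (S.ZX 0 (N + 1)).1 (S.ZX 0 (N + 1)).2).PosDef := by
  classical
  have hRc : S.Rc.PosDef := posDef_fromBlocks hRL hRR
  refine ⟨n, fun N hN => ?_⟩
  by_cases hp : S.p = 1
  · have hPsiX : ∀ Z X : Matrix (Fin n) (Fin n) ℝ, S.Psi Z X = X := by
      intro Z X
      simp [Sys.Psi, hp]
    have hXstep : ∀ j, ((fun j => (S.ZX 0 j).2) j).PosSemidef →
        (fun j => (S.ZX 0 j).2) (j + 1) = gstep S.A S.Q S.BL S.RL ((fun j => (S.ZX 0 j).2) j) := by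
      intro j _
      simp only [Sys.ZX]
      rw [hPsiX, Xstep_eq_gstep]
    have hpd : ((fun j => (S.ZX 0 j).2) (N + 1)).PosDef :=
      gchain_posDef hRL hQ hobs _ (by simp [Sys.ZX]) hXstep (by omega)
    rw [hPsiX]
    exact hpd
  · have hplt : S.p < 1 := lt_of_le_of_ne hp1 hp
    have hZstep : ∀ j, ((fun j => (S.ZX 0 j).1) j).PosSemidef →
        (fun j => (S.ZX 0 j).1) (j + 1) = gstep S.A S.Q S.Bc S.Rc ((fun j => (S.ZX 0 j).1) j) := by
      intro j hj
      simp only [Sys.ZX]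
      exact Zstep_eq_gstep S hj hRL hRR
    have hZpd : ((fun j => (S.ZX 0 j).1) (N + 1)).PosDef :=
      gchain_posDef hRc hQ hobs _ (by simp [Sys.ZX]) hZstep (by omega)
    have hXpsd : (S.ZX 0 (N + 1)).2.PosSemidef := (ZX_psd S hQ hRL hRR hp0 hp1 (N + 1)).2
    simp only [Sys.Psi]
    refine Matrix.PosDef.of_dotProduct_mulVec_pos ?_ ?_
    · exact ((posSemidef_smul hZpd.posSemidef (by linarith)).add
        (posSemidef_smul hXpsd hp0)).isHermitian
    · intro v hv
      have h1 : 0 < (1 - S.p) * (v ⬝ᵥ (S.ZX 0 (N + 1)).1 *ᵥ v) :=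
        mul_pos (by linarith) (quad_pos hZpd hv)
      have h2 : 0 ≤ S.p * (v ⬝ᵥ (S.ZX 0 (N + 1)).2 *ᵥ v) :=
        mul_nonneg hp0 (quad_nonneg hXpsd v)
      rw [star_trivial, Matrix.add_mulVec, dotProduct_add, Matrix.smul_mulVec,
        Matrix.smul_mulVec, dotProduct_smul, dotProduct_smul]
      simp only [smul_eq_mul]
      linarith


end NCS13
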